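/- arXiv:2212.04746 — 11 statements merged into one kernel-verified Lean document; each statement's English description precedes it below -/
import Mathlib

section
/- Let p ≥ 1, m_1,…,m_p ≥ 1, c ∈ Ω_p, and σ_j > 0 for all j. Then the sum of squared Hamming probabilities has the closed form ∑_{x ∈ Ω_p} p(x | c, σ)² = ∏_{j=1}^p [exp(2/σ_j) + (m_j−1)] / [exp(1/σ_j) + (m_j−1)]². Equivalently, the Gini heterogeneity index of the Hamming distribution is G = 1 − ∏_{j=1}^p [exp(2/σ_j) + (m_j−1)] / [exp(1/σ_j) + (m_j−1)]². -/
/-- The Hamming probability mass function on `Ω_p = Π j, Fin (m j)` with center `c`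
and scale `σ`. -/
noncomputable def hammingPMF {p : ℕ} (m : Fin p → ℕ)
    (c x : Π j : Fin p, Fin (m j)) (σ : Fin p → ℝ) : ℝ :=
  (∏ j : Fin p, (1 + ((m j : ℝ) - 1) * Real.exp (-1 / σ j)))⁻¹ *
    Real.exp (-∑ j : Fin p, (1 - if x j = c j then (1 : ℝ) else 0) / σ j)

lemma hamming_aux (n a : ℝ) (hn : 0 ≤ n) (ha : 0 < a) :
    ((1 + n * a⁻¹)⁻¹) ^ 2 * (1 + n * (a⁻¹) ^ 2) = (a ^ 2 + n) / (a + n) ^ 2 := by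
  have h1 : a + n ≠ 0 := by positivity
  have h2 : 1 + n * a⁻¹ ≠ 0 := by positivity
  field_simp

/-- closed form of the sum of squared Hamming probabilities; equivalently,
the Gini heterogeneity index is `1` minus this product. -/
theorem hamming_pmf_sum_sq
    (p : ℕ) (hp : 1 ≤ p) (m : Fin p → ℕ) (hm : ∀ j, 1 ≤ m j)
    (c : Π j : Fin p, Fin (m j)) (σ : Fin p → ℝ) (hσ : ∀ j, 0 < σ j) :
    ∑ x : Π j : Fin p, Fin (m j), (hammingPMF m c x σ) ^ 2
      = ∏ j : Fin p,
          (Real.exp (2 / σ j) + ((m j : ℝ) - 1)) /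
            (Real.exp (1 / σ j) + ((m j : ℝ) - 1)) ^ 2 := by
  set g : ∀ j : Fin p, Fin (m j) → ℝ := fun j y =>
    ((1 + ((m j : ℝ) - 1) * Real.exp (-1 / σ j))⁻¹ *
      Real.exp (-(1 - if y = c j then (1 : ℝ) else 0) / σ j)) ^ 2 with hg
  have hfac : ∀ x : Π j : Fin p, Fin (m j),
      (hammingPMF m c x σ) ^ 2 = ∏ j : Fin p, g j (x j) := by
    intro x
    have hs : (-∑ j : Fin p, (1 - if x j = c j then (1:ℝ) else 0) / σ j)
        = ∑ j : Fin p, (-(1 - if x j = c j then (1:ℝ) else 0)) / σ j := by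
      rw [← Finset.sum_neg_distrib]
      congr 1; funext j; rw [neg_div]
    simp only [hammingPMF, hg, hs, Real.exp_sum, mul_pow, Finset.prod_mul_distrib,
      Finset.prod_pow, Finset.prod_inv_distrib]
  simp_rw [hfac]
  rw [← Fintype.piFinset_univ, ← Finset.prod_univ_sum]
  apply Finset.prod_congr rfl
  intro j _
  have hsum : ∑ y : Fin (m j), g j y
      = ((1 + ((m j : ℝ) - 1) * Real.exp (-1 / σ j))⁻¹) ^ 2 *
          (1 + ((m j : ℝ) - 1) * (Real.exp (-1 / σ j)) ^ 2) := by
    have hc : (c j) ∈ (Finset.univ : Finset (Fin (m j))) := Finset.mem_univ _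
    rw [← Finset.add_sum_erase _ _ hc]
    have hrest : ∀ y ∈ Finset.univ.erase (c j),
        g j y = ((1 + ((m j : ℝ) - 1) * Real.exp (-1 / σ j))⁻¹) ^ 2 *
          (Real.exp (-1 / σ j)) ^ 2 := by
      intro y hy
      have hne : y ≠ c j := Finset.ne_of_mem_erase hy
      simp [hg, hne, mul_pow]
    rw [Finset.sum_congr rfl hrest, Finset.sum_const, Finset.card_erase_of_mem hc]
    have hgc : g j (c j) = ((1 + ((m j : ℝ) - 1) * Real.exp (-1 / σ j))⁻¹) ^ 2 := by
      simp [hg, mul_pow]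
    rw [hgc]
    have hm1 : (((Finset.univ : Finset (Fin (m j))).card - 1 : ℕ) : ℝ) = (m j : ℝ) - 1 := by
      have := hm j
      rw [Finset.card_univ, Fintype.card_fin, Nat.cast_sub this]
      simp
    rw [nsmul_eq_mul, hm1]
    ring
  rw [hsum]
  have ha : (0:ℝ) < Real.exp (1 / σ j) := Real.exp_pos _
  have hainv : Real.exp (-1 / σ j) = (Real.exp (1 / σ j))⁻¹ := by
    rw [← Real.exp_neg]; ring_nf
  have h2 : Real.exp (2 / σ j) = (Real.exp (1 / σ j)) ^ 2 := by
    rw [← Real.exp_nat_mul]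
    norm_num
    ring_nf
  have hn : (0:ℝ) ≤ (m j : ℝ) - 1 := by
    have := hm j; simp [le_sub_iff_add_le]; exact_mod_cast this
  rw [hainv, h2]
  exact hamming_aux _ _ hn ha
end

section
/- Let p ≥ 1, m_1,…,m_p ≥ 1, and c ∈ Ω_p. As the common scale parameter tends to zero from above, the Hamming distribution concentrates at its center: for every x ∈ Ω_p, lim_{σ → 0⁺} p(x | c, (σ,…,σ)) equals 1 if x = c and equals 0 if x ≠ c. -/
/-- as the common scale tends to `0⁺`, the Hamming distribution
concentrates at its center. -/
theorem hamming_pmf_tendsto_zero_scale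
    (p : ℕ) (hp : 1 ≤ p) (m : Fin p → ℕ) (hm : ∀ j, 1 ≤ m j)
    (c x : Π j : Fin p, Fin (m j)) :
    Filter.Tendsto (fun σ : ℝ => hammingPMF m c x (fun _ => σ))
      (nhdsWithin 0 (Set.Ioi 0))
      (nhds (if x = c then (1 : ℝ) else 0)) := by
  have hinv : Filter.Tendsto (fun σ : ℝ => σ⁻¹) (nhdsWithin 0 (Set.Ioi 0))
      Filter.atTop := tendsto_inv_nhdsGT_zero
  have hexp : Filter.Tendsto (fun σ : ℝ => Real.exp (-1 / σ))
      (nhdsWithin 0 (Set.Ioi 0)) (nhds 0) := by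
    have h1 : Filter.Tendsto (fun σ : ℝ => -1 / σ) (nhdsWithin 0 (Set.Ioi 0))
        Filter.atBot := by
      have h0 : (fun σ : ℝ => -1 / σ) = fun σ : ℝ => -(σ⁻¹) := by
        funext σ; ring
      rw [h0]
      exact Filter.tendsto_neg_atTop_atBot.comp hinv
    exact Real.tendsto_exp_atBot.comp h1
  -- product factor tends to 1
  have hprod : Filter.Tendsto
      (fun σ : ℝ => (∏ j : Fin p, (1 + ((m j : ℝ) - 1) * Real.exp (-1 / σ)))⁻¹)
      (nhdsWithin 0 (Set.Ioi 0)) (nhds 1) := by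
    have h : Filter.Tendsto
        (fun σ : ℝ => ∏ j : Fin p, (1 + ((m j : ℝ) - 1) * Real.exp (-1 / σ)))
        (nhdsWithin 0 (Set.Ioi 0)) (nhds 1) := by
      have := tendsto_finset_prod (f := fun (j : Fin p) (σ : ℝ) =>
          (1 + ((m j : ℝ) - 1) * Real.exp (-1 / σ))) Finset.univ
        (fun j _ => by
          simpa using (tendsto_const_nhds.add (hexp.const_mul ((m j : ℝ) - 1))))
      simpa using this
    simpa using h.inv₀ one_ne_zero
  -- exponential factor
  by_cases hxc : x = c
  · subst hxc
    simp only [hammingPMF, if_pos rfl]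
    have : (fun σ : ℝ => hammingPMF m x x (fun _ => σ)) =
        fun σ : ℝ => (∏ j : Fin p, (1 + ((m j : ℝ) - 1) * Real.exp (-1 / σ)))⁻¹ := by
      funext σ
      simp [hammingPMF]
    simpa [hammingPMF] using hprod
  · simp only [if_neg hxc]
    set k : ℝ := ∑ j : Fin p, (1 - if x j = c j then (1 : ℝ) else 0) with hk
    have hkpos : 0 < k := by
      obtain ⟨j, hj⟩ : ∃ j, x j ≠ c j := by
        by_contra h
        push_neg at h
        exact hxc (funext h)
      refine Finset.sum_pos' (fun i _ => ?_) ⟨j, Finset.mem_univ j, ?_⟩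
      · by_cases h : x i = c i <;> simp [h]
      · simp [hj]
    have hexp2 : Filter.Tendsto
        (fun σ : ℝ => Real.exp (-∑ j : Fin p, (1 - if x j = c j then (1 : ℝ) else 0) / σ))
        (nhdsWithin 0 (Set.Ioi 0)) (nhds 0) := by
      have h1 : Filter.Tendsto (fun σ : ℝ => k * σ⁻¹) (nhdsWithin 0 (Set.Ioi 0))
          Filter.atTop := hinv.const_mul_atTop hkpos
      have h2 : Filter.Tendsto (fun σ : ℝ => -(k * σ⁻¹)) (nhdsWithin 0 (Set.Ioi 0))
          Filter.atBot := Filter.tendsto_neg_atTop_atBot.comp h1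
      have h3 := Real.tendsto_exp_atBot.comp h2
      have heq : (fun σ : ℝ => Real.exp (-(k * σ⁻¹))) =
          fun σ : ℝ => Real.exp (-∑ j : Fin p, (1 - if x j = c j then (1 : ℝ) else 0) / σ) := by
        funext σ
        congr 1
        rw [hk, Finset.sum_mul]
        simp only [div_eq_mul_inv]
      rw [← heq]
      exact h3
    have := hprod.mul hexp2
    simpa [hammingPMF] using this
end

section
/- Let m ≥ 2 be an integer and v, w > 0 real numbers. The Hypergeometric Inverse Gamma (HIG) kernel h_{v,w}(σ) = (1 + (m−1)·exp(−1/σ))^{−(v+w)} · exp(−(w+1)/σ) · σ^{−2} is integrable on (0,∞), and its integral I(v,w) = ∫_0^∞ h_{v,w}(σ) dσ satisfies 0 < I(v,w) < ∞. Consequently f(σ | v,w) = h_{v,w}(σ)/I(v,w) is a well-defined probability density on (0,∞). -/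
open MeasureTheory

/-- The Hypergeometric Inverse Gamma (HIG) kernel on `(0, ∞)` for an attribute with
`m` modalities and parameters `v, w`. -/
noncomputable def higKernel (m : ℕ) (v w : ℝ) (σ : ℝ) : ℝ :=
  (1 + ((m : ℝ) - 1) * Real.exp (-1 / σ)) ^ (-(v + w)) * Real.exp (-(w + 1) / σ) / σ ^ 2

lemma aux_integrableOn (c : ℝ) (hc : 0 < c) :
    IntegrableOn (fun σ : ℝ => Real.exp (-c / σ) / σ ^ 2) (Set.Ioi 0) volume := by
  set g : ℝ → ℝ := fun σ => if σ ≤ 0 then 0 else (1 / c) * Real.exp (-c / σ) with hg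
  have hderiv : ∀ x ∈ Set.Ioi (0 : ℝ),
      HasDerivAt g (Real.exp (-c / x) / x ^ 2) x := by
    intro x hx
    have hx0 : (0 : ℝ) < x := hx
    have h1 : HasDerivAt (fun σ : ℝ => -c / σ) (c / x ^ 2) x := by
      have h : HasDerivAt (fun σ : ℝ => σ⁻¹) (-(x ^ 2)⁻¹) x := by
        simpa using hasDerivAt_inv hx0.ne'
      have := h.const_mul (-c)
      simpa [div_eq_mul_inv, mul_comm, mul_left_comm, neg_mul, mul_neg] using this
    have h2 : HasDerivAt (fun σ : ℝ => (1 / c) * Real.exp (-c / σ))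
        (Real.exp (-c / x) / x ^ 2) x := by
      have h := (h1.exp).const_mul (1 / c)
      have heq : 1 / c * (Real.exp (-c / x) * (c / x ^ 2)) = Real.exp (-c / x) / x ^ 2 := by
        field_simp
      rwa [heq] at h
    have hev : g =ᶠ[nhds x] fun σ : ℝ => (1 / c) * Real.exp (-c / σ) := by
      filter_upwards [Ioi_mem_nhds hx0] with y hy
      simp [hg, not_le.mpr (Set.mem_Ioi.mp hy)]
    exact h2.congr_of_eventuallyEq hev
  have hcont : ContinuousWithinAt g (Set.Ici 0) 0 := by
    have h5 : Filter.Tendsto g (nhdsWithin 0 (Set.Ioi 0)) (nhds 0) := by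
      have h1 : Filter.Tendsto (fun σ : ℝ => -c / σ) (nhdsWithin 0 (Set.Ioi 0))
          Filter.atBot := by
        have h2 : Filter.Tendsto (fun σ : ℝ => c * σ⁻¹) (nhdsWithin 0 (Set.Ioi 0))
            Filter.atTop := Filter.Tendsto.const_mul_atTop hc tendsto_inv_nhdsGT_zero
        have h3 : Filter.Tendsto (fun σ : ℝ => c / σ) (nhdsWithin 0 (Set.Ioi 0))
            Filter.atTop := by simpa [div_eq_mul_inv] using h2
        have := Filter.tendsto_neg_atTop_atBot.comp h3
        simpa [Function.comp_def, neg_div] using this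
      have h3 := Real.tendsto_exp_atBot.comp h1
      have h4 : Filter.Tendsto (fun σ : ℝ => (1 / c) * Real.exp (-c / σ))
          (nhdsWithin 0 (Set.Ioi 0)) (nhds 0) := by
        simpa using Filter.Tendsto.const_mul (1 / c) h3
      refine h4.congr' ?_
      filter_upwards [self_mem_nhdsWithin] with y hy
      simp [hg, not_le.mpr (Set.mem_Ioi.mp hy)]
    rw [← continuousWithinAt_Ioi_iff_Ici]
    unfold ContinuousWithinAt
    have h0 : g 0 = 0 := by simp [hg]
    rw [h0]
    exact h5
  have htop : Filter.Tendsto g Filter.atTop (nhds (1 / c)) := by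
    have h1 : Filter.Tendsto (fun σ : ℝ => -c / σ) Filter.atTop (nhds 0) :=
      Filter.Tendsto.const_div_atTop Filter.tendsto_id (-c)
    have h2 := (Real.continuous_exp.tendsto 0).comp h1
    have h3 : Filter.Tendsto (fun σ : ℝ => (1 / c) * Real.exp (-c / σ))
        Filter.atTop (nhds (1 / c)) := by
      simpa using Filter.Tendsto.const_mul (1 / c) h2
    refine h3.congr' ?_
    filter_upwards [Filter.eventually_gt_atTop 0] with y hy
    simp [hg, not_le.mpr hy]
  exact integrableOn_Ioi_deriv_of_nonneg hcont hderiv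
    (fun x hx => by positivity) htop

/-- the HIG kernel is integrable on `(0, ∞)` with a strictly positive
(finite) integral, so that its normalization is a well-defined probability density. -/
theorem higKernel_integrable_and_pos
    (m : ℕ) (hm : 2 ≤ m) (v w : ℝ) (hv : 0 < v) (hw : 0 < w) :
    IntegrableOn (higKernel m v w) (Set.Ioi 0) volume ∧
      0 < ∫ σ in Set.Ioi (0 : ℝ), higKernel m v w σ := by
  have hm1 : (0 : ℝ) ≤ (m : ℝ) - 1 := by
    have : (1 : ℝ) ≤ (m : ℝ) := by exact_mod_cast Nat.one_le_of_lt hm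
    linarith
  have hbase : ∀ σ : ℝ, (1 : ℝ) ≤ 1 + ((m : ℝ) - 1) * Real.exp (-1 / σ) := by
    intro σ
    nlinarith [Real.exp_pos (-1 / σ), mul_nonneg hm1 (Real.exp_pos (-1 / σ)).le]
  have hpos : ∀ σ ∈ Set.Ioi (0 : ℝ), 0 < higKernel m v w σ := by
    intro σ hσ
    have hσ0 : (0 : ℝ) < σ := hσ
    have hb : (0 : ℝ) < 1 + ((m : ℝ) - 1) * Real.exp (-1 / σ) :=
      lt_of_lt_of_le one_pos (hbase σ)
    unfold higKernel
    positivity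
  have hbound : ∀ σ ∈ Set.Ioi (0 : ℝ),
      higKernel m v w σ ≤ Real.exp (-(w + 1) / σ) / σ ^ 2 := by
    intro σ hσ
    have hσ0 : (0 : ℝ) < σ := hσ
    have hA : (1 + ((m : ℝ) - 1) * Real.exp (-1 / σ)) ^ (-(v + w)) ≤ 1 :=
      Real.rpow_le_one_of_one_le_of_nonpos (hbase σ) (by linarith)
    have hA0 : (0 : ℝ) ≤ (1 + ((m : ℝ) - 1) * Real.exp (-1 / σ)) ^ (-(v + w)) :=
      Real.rpow_nonneg (by linarith [hbase σ]) _
    unfold higKernel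
    rw [div_le_div_iff_of_pos_right (by positivity)]
    calc (1 + ((m : ℝ) - 1) * Real.exp (-1 / σ)) ^ (-(v + w)) * Real.exp (-(w + 1) / σ)
        ≤ 1 * Real.exp (-(w + 1) / σ) :=
          mul_le_mul_of_nonneg_right hA (Real.exp_pos _).le
      _ = Real.exp (-(w + 1) / σ) := one_mul _
  have hmeas : AEStronglyMeasurable (higKernel m v w)
      (volume.restrict (Set.Ioi (0 : ℝ))) := by
    apply ContinuousOn.aestronglyMeasurable _ measurableSet_Ioi
    intro σ hσ
    have hσ0 : (0 : ℝ) < σ := hσ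
    have hb : (0 : ℝ) < 1 + ((m : ℝ) - 1) * Real.exp (-1 / σ) :=
      lt_of_lt_of_le one_pos (hbase σ)
    apply ContinuousAt.continuousWithinAt
    have hinv : ContinuousAt (fun σ : ℝ => σ⁻¹) σ := continuousAt_inv₀ hσ0.ne'
    have h1 : ContinuousAt (fun σ : ℝ => 1 + ((m : ℝ) - 1) * Real.exp (-1 / σ)) σ := by
      have : ContinuousAt (fun σ : ℝ => -1 / σ) σ := by
        simpa [div_eq_mul_inv] using hinv.const_mul (-1 : ℝ)
      exact (continuousAt_const.mul (Real.continuous_exp.continuousAt.comp this)).const_add 1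
    have h2 : ContinuousAt
        (fun σ : ℝ => (1 + ((m : ℝ) - 1) * Real.exp (-1 / σ)) ^ (-(v + w))) σ :=
      h1.rpow_const (Or.inl hb.ne')
    have h3 : ContinuousAt (fun σ : ℝ => Real.exp (-(w + 1) / σ)) σ := by
      have : ContinuousAt (fun σ : ℝ => -(w + 1) / σ) σ := by
        simpa [div_eq_mul_inv] using hinv.const_mul (-(w + 1) : ℝ)
      exact Real.continuous_exp.continuousAt.comp this
    unfold higKernel
    exact (h2.mul h3).div (by fun_prop) (by positivity)
  have hint : IntegrableOn (higKernel m v w) (Set.Ioi 0) volume := by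
    refine Integrable.mono' (aux_integrableOn (w + 1) (by linarith)) hmeas ?_
    filter_upwards [ae_restrict_mem measurableSet_Ioi] with σ hσ
    rw [Real.norm_eq_abs, abs_of_pos (hpos σ hσ)]
    exact hbound σ hσ
  refine ⟨hint, ?_⟩
  rw [setIntegral_pos_iff_support_of_nonneg_ae ?_ hint]
  · have hsub : Set.Ioi (0 : ℝ) ⊆ Function.support (higKernel m v w) ∩ Set.Ioi 0 :=
      fun σ hσ => ⟨(hpos σ hσ).ne', hσ⟩
    calc (0 : ENNReal) < volume (Set.Ioi (0 : ℝ)) := by simp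
      _ ≤ volume (Function.support (higKernel m v w) ∩ Set.Ioi 0) := measure_mono hsub
  · filter_upwards [ae_restrict_mem measurableSet_Ioi] with σ hσ
    exact (hpos σ hσ).le
end

section
/- Let m ≥ 2 be an integer and v, w > 0 real numbers. The normalizing constant of the HIG kernel equals the stated hypergeometric expression: ∫_0^∞ (1 + (m−1)·exp(−1/σ))^{−(v+w)} · exp(−(w+1)/σ) · σ^{−2} dσ = m^{−(v+w)}/(w+1) · ₂F₁(1, v+w; w+2; (m−1)/m), where ₂F₁(a,b;c;z) = ∑_{k=0}^∞ [(a)_k (b)_k / ((c)_k k!)] z^k is the Gauss hypergeometric series and (a)_k denotes the rising factorial a(a+1)⋯(a+k−1). The series converges since 0 ≤ (m−1)/m < 1. -/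
open MeasureTheory

/-- The rising factorial (Pochhammer symbol) `(a)_k = a (a+1) ⋯ (a+k−1)`. -/
noncomputable def risingFactorial (a : ℝ) (k : ℕ) : ℝ :=
  ∏ i ∈ Finset.range k, (a + i)

/-- The Gauss hypergeometric series
`₂F₁(a, b; c; z) = ∑_{k=0}^∞ (a)_k (b)_k / ((c)_k k!) · z^k`. -/
noncomputable def hyp2F1 (a b c z : ℝ) : ℝ :=
  ∑' k : ℕ,
    risingFactorial a k * risingFactorial b k /
      (risingFactorial c k * (Nat.factorial k : ℝ)) * z ^ k

open Real Set Filter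

lemma rF_zero (a : ℝ) : risingFactorial a 0 = 1 := by simp [risingFactorial]

lemma rF_succ (a : ℝ) (k : ℕ) :
    risingFactorial a (k + 1) = risingFactorial a k * (a + k) := by
  simp [risingFactorial, Finset.prod_range_succ]

lemma rF_pos {a : ℝ} (ha : 0 < a) (k : ℕ) : 0 < risingFactorial a k := by
  induction k with
  | zero => simp [rF_zero]
  | succ n ih => rw [rF_succ]; positivity

lemma rF_one (k : ℕ) : risingFactorial 1 k = k.factorial := by
  induction k with
  | zero => simp [rF_zero]
  | succ n ih => rw [rF_succ, ih]; push_cast [Nat.factorial_succ]; ring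

lemma Gamma_add_nat {b : ℝ} (hb : 0 < b) (k : ℕ) :
    Real.Gamma (b + k) = Real.Gamma b * risingFactorial b k := by
  induction k with
  | zero => simp [rF_zero]
  | succ n ih =>
    have h1 : b + (n + 1 : ℕ) = (b + n) + 1 := by push_cast; ring
    rw [h1, Real.Gamma_add_one (by positivity), ih, rF_succ]; ring

lemma summable_rF_ratio {b c x : ℝ} (hb : 0 < b) (hc : 0 < c) (hx0 : 0 < x)
    (hx1 : x < 1) :
    Summable (fun k : ℕ => risingFactorial b k / risingFactorial c k * x ^ k) := by
  set r : ℝ := (x + 1) / 2 with hr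
  have hxr : x < r := by rw [hr]; linarith
  have hr1 : r < 1 := by rw [hr]; linarith
  have htend : Tendsto (fun k : ℕ => (b + k) / (c + k) * x) atTop (nhds x) := by
    have h0 : Tendsto (fun k : ℕ => (b - c) / (c + k)) atTop (nhds 0) := by
      apply Tendsto.div_atTop tendsto_const_nhds
      exact tendsto_atTop_add_const_left _ c tendsto_natCast_atTop_atTop
    have : Tendsto (fun k : ℕ => (1 + (b - c) / (c + k)) * x) atTop (nhds ((1 + 0) * x)) := by
      exact ((tendsto_const_nhds.add h0).mul tendsto_const_nhds)
    simp only [add_zero, one_mul] at this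
    apply this.congr'
    filter_upwards [eventually_atTop.2 ⟨0, fun n _ => trivial⟩] with n _
    have hcn : c + (n : ℝ) ≠ 0 := by positivity
    field_simp
    ring
  have hev : ∀ᶠ k : ℕ in atTop, (b + k) / (c + k) * x ≤ r :=
    htend.eventually_le_const hxr
  apply summable_of_ratio_norm_eventually_le hr1
  filter_upwards [hev] with k hk
  have hck : (0:ℝ) < c + k := by positivity
  have hbk : (0:ℝ) < b + k := by positivity
  have hpos : ∀ j : ℕ, 0 < risingFactorial b j / risingFactorial c j * x ^ j := by
    intro j
    have := rF_pos hb j; have := rF_pos hc j; positivity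
  rw [Real.norm_eq_abs, Real.norm_eq_abs, abs_of_pos (hpos _), abs_of_pos (hpos _)]
  have hstep : risingFactorial b (k+1) / risingFactorial c (k+1) * x ^ (k+1)
      = (risingFactorial b k / risingFactorial c k * x ^ k) * ((b + k) / (c + k) * x) := by
    rw [rF_succ, rF_succ]
    have h1 := (rF_pos hc k).ne'
    field_simp
    ring
  rw [hstep, mul_comm (r:ℝ) _]
  exact mul_le_mul_of_nonneg_left hk (hpos k).le

lemma my_integral_exp_neg_mul_rpow {c s : ℝ} (hc : 0 < c) (hs : 0 < s) :
    ∫ t in Ioi (0:ℝ), Real.exp (-(c*t)) * t ^ (s-1) = Real.Gamma s / c ^ s := by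
  have h : ∫ x in Ioi (0:ℝ), Real.exp (-(c*x)) * (c*x) ^ (s-1)
      = c⁻¹ • ∫ x in Ioi (0:ℝ), Real.exp (-x) * x ^ (s-1) := by
    have := integral_comp_mul_left_Ioi (fun x => Real.exp (-x) * x ^ (s-1)) 0 hc
    simpa [mul_zero] using this
  rw [← Real.Gamma_eq_integral hs] at h
  have h2 : ∫ x in Ioi (0:ℝ), Real.exp (-(c*x)) * (c*x) ^ (s-1)
      = c ^ (s-1) * ∫ x in Ioi (0:ℝ), Real.exp (-(c*x)) * x ^ (s-1) := by
    rw [← integral_const_mul]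
    apply setIntegral_congr_fun measurableSet_Ioi
    intro x hx
    simp only []
    rw [Real.mul_rpow hc.le (le_of_lt hx)]
    ring
  rw [h2] at h
  have hcs : (0:ℝ) < c ^ s := Real.rpow_pos_of_pos hc s
  have hcs1 : c ^ (s-1) = c ^ s / c := by rw [Real.rpow_sub hc, Real.rpow_one]
  rw [hcs1] at h
  rw [smul_eq_mul] at h
  field_simp at h ⊢
  linarith [h]

lemma hasSum_binomial {b x : ℝ} (hb : 0 < b) (hx0 : 0 < x) (hx1 : x < 1) :
    HasSum (fun k : ℕ => risingFactorial b k / k.factorial * x ^ k) ((1 - x) ^ (-b)) := by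
  have h1x : (0:ℝ) < 1 - x := by linarith
  have hsum : Summable (fun k : ℕ => risingFactorial b k / k.factorial * x ^ k) := by
    refine (summable_rF_ratio hb one_pos hx0 hx1).congr fun k => ?_
    rw [rF_one]
  have hGb : (0:ℝ) < Real.Gamma b := Real.Gamma_pos_of_pos hb
  set F : ℕ → ℝ → ℝ := fun k t => (x ^ k / k.factorial) * (Real.exp (-t) * t ^ ((b + k) - 1))
    with hF
  have hInt : ∀ k, Integrable (F k) (volume.restrict (Ioi 0)) := by
    intro k
    exact (Real.GammaIntegral_convergent (by positivity : (0:ℝ) < b + k)).const_mul _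
  have hval : ∀ k, ∫ t in Ioi (0:ℝ), F k t
      = Real.Gamma b * (risingFactorial b k / k.factorial * x ^ k) := by
    intro k
    rw [hF]
    simp only []
    rw [integral_const_mul, ← Real.Gamma_eq_integral (by positivity : (0:ℝ) < b + k),
      Gamma_add_nat hb]
    ring
  have hnorm : ∀ k, ∫ t in Ioi (0:ℝ), ‖F k t‖
      = Real.Gamma b * (risingFactorial b k / k.factorial * x ^ k) := by
    intro k
    rw [← hval k]
    apply integral_congr_ae
    filter_upwards [ae_restrict_mem measurableSet_Ioi] with t ht
    apply norm_of_nonneg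
    have ht' : (0:ℝ) ≤ t := (le_of_lt ht)
    have : (0:ℝ) ≤ t ^ ((b + k) - 1) := Real.rpow_nonneg ht' _
    positivity
  have hsumnorm : Summable fun k => ∫ t in Ioi (0:ℝ), ‖F k t‖ := by
    refine ((hsum.mul_left (Real.Gamma b)).congr fun k => ?_)
    rw [hnorm k]
  have hswap := integral_tsum_of_summable_integral_norm hInt hsumnorm
  have hpt : ∀ t ∈ Ioi (0:ℝ), ∑' k, F k t = Real.exp (-((1-x)*t)) * t ^ (b - 1) := by
    intro t ht
    have ht0 : (0:ℝ) < t := ht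
    have hFk : ∀ k : ℕ, F k t = (Real.exp (-t) * t ^ (b-1)) * ((x*t) ^ k / k.factorial) := by
      intro k
      rw [hF]
      simp only []
      rw [show (b + (k:ℝ)) - 1 = (b - 1) + (k:ℝ) by ring, Real.rpow_add ht0,
        Real.rpow_natCast, mul_pow]
      ring
    calc ∑' k, F k t
        = ∑' k, (Real.exp (-t) * t ^ (b-1)) * ((x*t) ^ k / k.factorial) := by
          exact tsum_congr hFk
      _ = (Real.exp (-t) * t ^ (b-1)) * ∑' k, ((x*t) ^ k / k.factorial) := tsum_mul_left
      _ = (Real.exp (-t) * t ^ (b-1)) * Real.exp (x*t) := by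
          rw [Real.exp_eq_exp_ℝ, NormedSpace.exp_eq_tsum_div]
      _ = Real.exp (-((1-x)*t)) * t ^ (b - 1) := by
          rw [mul_right_comm, ← Real.exp_add, show -t + x*t = -((1-x)*t) by ring]
  have hL : ∫ t in Ioi (0:ℝ), ∑' k, F k t = Real.Gamma b / (1-x) ^ b := by
    rw [setIntegral_congr_fun measurableSet_Ioi hpt]
    exact my_integral_exp_neg_mul_rpow h1x hb
  rw [hL] at hswap
  have hR : ∑' k, ∫ t in Ioi (0:ℝ), F k t
      = Real.Gamma b * ∑' k, (risingFactorial b k / k.factorial * x ^ k) := by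
    rw [tsum_congr hval, tsum_mul_left]
  rw [hR] at hswap
  have key : ∑' k, (risingFactorial b k / k.factorial * x ^ k) = (1 - x) ^ (-b) := by
    rw [Real.rpow_neg h1x.le]
    exact mul_left_cancel₀ hGb.ne' (hswap.trans (by rw [div_eq_mul_inv]))
  exact key ▸ hsum.hasSum

lemma cont_rpow {w : ℝ} (hw : 0 < w) : Continuous (fun x : ℝ => (1 - x) ^ w) := by
  have h : Continuous fun y : ℝ => y ^ w := by
    rw [continuous_iff_continuousAt]
    intro y
    exact Real.continuousAt_rpow_const y w (Or.inr hw.le)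
  exact h.comp (continuous_const.sub continuous_id)

lemma beta_aux : ∀ (k : ℕ) {w : ℝ}, 0 < w →
    ∫ u in (0:ℝ)..1, (u:ℝ) ^ k * (1 - u) ^ w
      = k.factorial / ∏ i ∈ Finset.range (k + 1), (w + 1 + i) := by
  intro k
  induction k with
  | zero =>
    intro w hw
    have hw1 : w + 1 ≠ 0 := by positivity
    have h := intervalIntegral.integral_comp_sub_left (a := (0:ℝ)) (b := 1)
      (fun u : ℝ => u ^ w) 1
    simp only [sub_zero, sub_self] at h
    simp only [pow_zero, one_mul]
    rw [h, integral_rpow (Or.inl (by linarith : (-1:ℝ) < w))]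
    rw [Real.one_rpow, Real.zero_rpow hw1]
    simp
  | succ k ih =>
    intro w hw
    have hw1 : (0:ℝ) < w + 1 := by linarith
    have hu : ∀ x ∈ uIcc (0:ℝ) 1, HasDerivAt (fun y : ℝ => y ^ (k+1))
        (((k:ℝ)+1) * x ^ k) x := by
      intro x _
      simpa using hasDerivAt_pow (k+1) x
    have hv : ∀ x ∈ uIcc (0:ℝ) 1, HasDerivAt (fun y : ℝ => -(1-y) ^ (w+1) / (w+1))
        ((1-x) ^ w) x := by
      intro x _
      have h1 : HasDerivAt (fun y : ℝ => 1 - y) (-1) x := by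
        simpa using (hasDerivAt_id x).const_sub (1:ℝ)
      have h2 : HasDerivAt (fun y : ℝ => y ^ (w+1)) ((w+1) * (1-x) ^ ((w+1)-1)) (1-x) :=
        Real.hasDerivAt_rpow_const (Or.inr (by linarith : (1:ℝ) ≤ w+1))
      have h3 := (h2.comp x h1).neg.div_const (w+1)
      refine h3.congr_deriv ?_
      rw [add_sub_cancel_right]
      field_simp
    have hiu : IntervalIntegrable (fun x : ℝ => ((k:ℝ)+1) * x ^ k) volume 0 1 :=
      (continuous_const.mul (continuous_pow k)).intervalIntegrable _ _
    have hiv : IntervalIntegrable (fun x : ℝ => (1-x) ^ w) volume 0 1 :=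
      (cont_rpow hw).intervalIntegrable _ _
    have hibp := intervalIntegral.integral_mul_deriv_eq_deriv_mul hu hv hiu hiv
    have hb1 : -(1-(1:ℝ)) ^ (w+1) / (w+1) = 0 := by
      rw [sub_self, Real.zero_rpow (by positivity)]
      simp
    rw [hb1] at hibp
    simp only [one_pow, mul_zero, ne_eq, OfNat.ofNat_ne_zero, not_false_eq_true,
      zero_pow, zero_mul, sub_zero, zero_sub, pow_succ] at hibp
    have hrw : (∫ x in (0:ℝ)..1, (((k:ℝ)+1) * x ^ k) * (-(1-x) ^ (w+1) / (w+1)))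
        = -(((k:ℝ)+1) / (w+1)) * ∫ x in (0:ℝ)..1, x ^ k * (1-x) ^ (w+1) := by
      rw [← intervalIntegral.integral_const_mul]
      apply intervalIntegral.integral_congr
      intro x _
      field_simp
    rw [hrw, ih hw1] at hibp
    have hprod : ∏ i ∈ Finset.range (k + 2), (w + 1 + i)
        = (w + 1) * ∏ i ∈ Finset.range (k + 1), (w + 1 + 1 + i) := by
      rw [Finset.prod_range_succ']
      simp only [Nat.cast_zero, add_zero, Nat.cast_add, Nat.cast_one]
      rw [mul_comm]
      congr 1
      apply Finset.prod_congr rfl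
      intro i _
      ring
    have hppos : (0:ℝ) < ∏ i ∈ Finset.range (k + 1), (w + 1 + 1 + i) := by
      apply Finset.prod_pos
      intro i _
      positivity
    rw [show ((k:ℕ)+1).factorial = (k+1) * k.factorial from Nat.factorial_succ k]
    rw [hprod]
    push_cast
    simp only [pow_succ]
    rw [hibp]
    field_simp

lemma beta_rF (k : ℕ) {w : ℝ} (hw : 0 < w) :
    ∫ u in (0:ℝ)..1, (u:ℝ) ^ k * (1 - u) ^ w
      = k.factorial / ((w + 1) * risingFactorial (w + 2) k) := by
  rw [beta_aux k hw]
  congr 1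
  rw [Finset.prod_range_succ']
  simp only [Nat.cast_zero, add_zero]
  rw [mul_comm]
  congr 1
  unfold risingFactorial
  apply Finset.prod_congr rfl
  intro i _
  push_cast
  ring

lemma hig_subst (m : ℕ) (v w : ℝ) :
    ∫ σ in Set.Ioi (0:ℝ), higKernel m v w σ
      = ∫ t in Ioo (0:ℝ) 1, (1 + ((m:ℝ) - 1) * t) ^ (-(v+w)) * t ^ w := by
  set f : ℝ → ℝ := fun t => (1 + ((m:ℝ) - 1) * t) ^ (-(v+w)) * t ^ w with hf
  set g : ℝ → ℝ := fun σ => Real.exp (-σ⁻¹) with hg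
  set g' : ℝ → ℝ := fun σ => Real.exp (-σ⁻¹) * (σ^2)⁻¹ with hg'
  have himg : g '' Ioi (0:ℝ) = Ioo (0:ℝ) 1 := by
    ext t
    constructor
    · rintro ⟨σ, hσ, rfl⟩
      have hσ0 : (0:ℝ) < σ := hσ
      refine ⟨Real.exp_pos _, ?_⟩
      rw [Real.exp_lt_one_iff]
      simp only [neg_lt_zero]
      positivity
    · rintro ⟨ht0, ht1⟩
      refine ⟨(-Real.log t)⁻¹, ?_, ?_⟩
      · have hlog := Real.log_neg ht0 ht1
        exact inv_pos.2 (neg_pos.2 hlog)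
      · rw [hg]
        simp only [inv_inv, neg_neg]
        exact Real.exp_log ht0
  have hderiv : ∀ σ ∈ Ioi (0:ℝ), HasDerivWithinAt g (g' σ) (Ioi 0) σ := by
    intro σ hσ
    have hσ0 : (0:ℝ) < σ := hσ
    have h1 : HasDerivAt (fun y : ℝ => -y⁻¹) ((σ^2)⁻¹) σ := by
      exact (hasDerivAt_inv hσ0.ne').neg.congr_deriv (by ring)
    exact ((Real.hasDerivAt_exp _).comp σ h1).hasDerivWithinAt
  have hinj : Set.InjOn g (Ioi 0) := by
    intro a ha b hb hab
    rw [hg] at hab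
    simp only [Real.exp_eq_exp, neg_inj, inv_inj] at hab
    exact hab
  have := integral_image_eq_integral_abs_deriv_smul measurableSet_Ioi hderiv hinj f
  rw [himg] at this
  rw [this]
  apply setIntegral_congr_fun measurableSet_Ioi
  intro σ hσ
  have hσ0 : (0:ℝ) < σ := hσ
  have habs : |g' σ| = g' σ := by
    apply abs_of_pos
    rw [hg']
    positivity
  show higKernel m v w σ = |g' σ| • f (g σ)
  rw [smul_eq_mul, habs, hg', hg, hf, higKernel]
  simp only []
  have hrw1 : -1 / σ = -σ⁻¹ := by field_simp
  have hrw2 : (Real.exp (-σ⁻¹)) ^ w = Real.exp (-σ⁻¹ * w) := (Real.exp_mul _ _).symm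
  have hrw3 : Real.exp (-(w+1)/σ) = Real.exp (-σ⁻¹ * w) * Real.exp (-σ⁻¹) := by
    rw [← Real.exp_add]
    congr 1
    field_simp
    ring
  rw [hrw1, hrw2, hrw3]
  ring

/-- Proposition 2, normalizing constant: the integral of the HIG kernel
equals `m^{−(v+w)}/(w+1) · ₂F₁(1, v+w; w+2; (m−1)/m)`. -/
theorem higKernel_integral_eq_hypergeometric
    (m : ℕ) (hm : 2 ≤ m) (v w : ℝ) (hv : 0 < v) (hw : 0 < w) :
    ∫ σ in Set.Ioi (0 : ℝ), higKernel m v w σ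
      = (m : ℝ) ^ (-(v + w)) / (w + 1) *
          hyp2F1 1 (v + w) (w + 2) (((m : ℝ) - 1) / m) := by
  have hb : (0:ℝ) < v + w := by positivity
  have hm2 : (2:ℝ) ≤ (m:ℝ) := by exact_mod_cast hm
  have hm0 : (0:ℝ) < m := by linarith
  set b : ℝ := v + w with hb_def
  set z : ℝ := ((m:ℝ) - 1) / m with hz_def
  have hz0 : 0 < z := div_pos (by linarith) hm0
  have hz1 : z < 1 := (div_lt_one hm0).mpr (by linarith)
  have hw1 : (0:ℝ) < w + 1 := by linarith
  have hw2 : (0:ℝ) < w + 2 := by linarith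
  rw [hig_subst]
  have hB : ∫ t in Ioo (0:ℝ) 1, (1 + ((m:ℝ) - 1) * t) ^ (-b) * t ^ w
      = ∫ t in (0:ℝ)..1, (1 + ((m:ℝ) - 1) * t) ^ (-b) * t ^ w := by
    rw [intervalIntegral.integral_of_le zero_le_one, integral_Ioc_eq_integral_Ioo]
  rw [hB]
  have hCeq : Set.EqOn (fun t : ℝ => (1 + ((m:ℝ) - 1) * t) ^ (-b) * t ^ w)
      (fun t : ℝ => (m:ℝ) ^ (-b) * ((1 - z * (1 - t)) ^ (-b) * (1 - (1 - t)) ^ w))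
      (Set.uIcc 0 1) := by
    intro t ht
    rw [Set.uIcc_of_le zero_le_one] at ht
    simp only []
    have h1 : 1 + ((m:ℝ) - 1) * t = m * (1 - z * (1 - t)) := by
      rw [hz_def]
      field_simp
      ring
    have h2 : (0:ℝ) ≤ 1 - z * (1 - t) := by nlinarith [ht.1, ht.2]
    rw [h1, Real.mul_rpow hm0.le h2]
    rw [sub_sub_cancel]
    ring
  rw [intervalIntegral.integral_congr hCeq]
  rw [intervalIntegral.integral_const_mul]
  have hD := intervalIntegral.integral_comp_sub_left (a := (0:ℝ)) (b := 1)
    (fun u : ℝ => (1 - z * u) ^ (-b) * (1 - u) ^ w) 1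
  simp only [sub_zero, sub_self] at hD
  rw [hD]
  -- compute the remaining integral as a series
  have hJ : ∫ u in (0:ℝ)..1, (1 - z * u) ^ (-b) * (1 - u) ^ w
      = ∑' k : ℕ, (risingFactorial b k / k.factorial * z ^ k)
          * ((k.factorial : ℝ) / ((w + 1) * risingFactorial (w + 2) k)) := by
    set G : ℕ → ℝ → ℝ := fun k u =>
      (risingFactorial b k / k.factorial * z ^ k) * (u ^ k * (1 - u) ^ w) with hG
    have hGcont : ∀ k, Continuous (G k) := fun k =>
      continuous_const.mul ((continuous_pow k).mul (cont_rpow hw))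
    have hGint : ∀ k, Integrable (G k) (volume.restrict (Ioo 0 1)) := fun k =>
      ((hGcont k).integrableOn_Icc).mono_set Ioo_subset_Icc_self
    have hBk : ∀ k : ℕ, ∫ u in Ioo (0:ℝ) 1, u ^ k * (1 - u) ^ w
        = (k.factorial : ℝ) / ((w + 1) * risingFactorial (w + 2) k) := by
      intro k
      rw [← integral_Ioc_eq_integral_Ioo, ← intervalIntegral.integral_of_le zero_le_one]
      exact beta_rF k hw
    have hGval : ∀ k, ∫ u in Ioo (0:ℝ) 1, G k u
        = (risingFactorial b k / k.factorial * z ^ k)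
          * ((k.factorial : ℝ) / ((w + 1) * risingFactorial (w + 2) k)) := by
      intro k
      rw [hG]
      simp only []
      rw [integral_const_mul, hBk k]
    have hGnorm : ∀ k, ∫ u in Ioo (0:ℝ) 1, ‖G k u‖
        = (risingFactorial b k / k.factorial * z ^ k)
          * ((k.factorial : ℝ) / ((w + 1) * risingFactorial (w + 2) k)) := by
      intro k
      rw [← hGval k]
      apply integral_congr_ae
      filter_upwards [ae_restrict_mem measurableSet_Ioo] with u hu
      apply norm_of_nonneg
      have h1 : (0:ℝ) ≤ (1 - u) ^ w := Real.rpow_nonneg (by linarith [hu.2]) _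
      have hrf := (rF_pos hb k).le
      exact mul_nonneg (mul_nonneg (div_nonneg hrf (Nat.cast_nonneg _))
        (pow_nonneg hz0.le k)) (mul_nonneg (pow_nonneg hu.1.le k) h1)
    have hsumm : Summable fun k => ∫ u in Ioo (0:ℝ) 1, ‖G k u‖ := by
      refine ((summable_rF_ratio hb hw2 hz0 hz1).mul_right ((w + 1)⁻¹)).congr fun k => ?_
      rw [hGnorm k]
      have h1 := (rF_pos hw2 k).ne'
      have h2 : (k.factorial : ℝ) ≠ 0 := Nat.cast_ne_zero.2 k.factorial_ne_zero
      field_simp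
      try ring
      try exact Or.inl trivial
    have hswap := integral_tsum_of_summable_integral_norm hGint hsumm
    have hae : ∀ u ∈ Ioo (0:ℝ) 1, (1 - z * u) ^ (-b) * (1 - u) ^ w = ∑' k, G k u := by
      intro u hu
      have hzu0 : 0 < z * u := mul_pos hz0 hu.1
      have hzu1 : z * u < 1 := lt_trans (mul_lt_of_lt_one_right hz0 hu.2) hz1
      have hsum := (hasSum_binomial hb hzu0 hzu1).mul_right ((1 - u) ^ w)
      rw [← hsum.tsum_eq]
      apply tsum_congr
      intro k
      rw [hG]
      simp only [mul_pow]
      ring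
    calc ∫ u in (0:ℝ)..1, (1 - z * u) ^ (-b) * (1 - u) ^ w
        = ∫ u in Ioo (0:ℝ) 1, (1 - z * u) ^ (-b) * (1 - u) ^ w := by
          rw [intervalIntegral.integral_of_le zero_le_one, integral_Ioc_eq_integral_Ioo]
      _ = ∫ u in Ioo (0:ℝ) 1, ∑' k, G k u := setIntegral_congr_fun measurableSet_Ioo hae
      _ = ∑' k, ∫ u in Ioo (0:ℝ) 1, G k u := hswap.symm
      _ = _ := tsum_congr hGval
  rw [hJ]
  have hE : (∑' k : ℕ, (risingFactorial b k / k.factorial * z ^ k)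
        * ((k.factorial : ℝ) / ((w + 1) * risingFactorial (w + 2) k)))
      = (w + 1)⁻¹ * ∑' k : ℕ, risingFactorial 1 k * risingFactorial b k /
          (risingFactorial (w + 2) k * (k.factorial : ℝ)) * z ^ k := by
    rw [← tsum_mul_left]
    apply tsum_congr
    intro k
    rw [rF_one]
    have h1 := (rF_pos hw2 k).ne'
    have h2 : (k.factorial : ℝ) ≠ 0 := Nat.cast_ne_zero.2 k.factorial_ne_zero
    field_simp
  rw [hE, hyp2F1]
  rw [div_eq_mul_inv]
  ring
end

section
/- Let m ≥ 2 be an integer, v, w > 0, n ≥ 1, and let y_1,…,y_n ∈ {1,…,m} and c ∈ {1,…,m}. Put s = #{i : y_i = c}. Then for every σ > 0 the HIG prior kernel times the Hamming likelihood of one attribute is exactly the HIG kernel with updated parameters: h_{v,w}(σ) · (1 + (m−1)·exp(−1/σ))^{−n} · exp(−(n−s)/σ) = h_{v+s, w+n−s}(σ). In particular, the HIG family is (semi-)conjugate for the scale parameter of the Hamming distribution, with posterior parameters v* = v + s and w* = w + n − s. -/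
/-- Proposition 2, conjugacy: the HIG prior kernel times the
single-attribute Hamming likelihood is the HIG kernel with updated parameters
`v* = v + s` and `w* = w + n − s`, where `s = #{i : y_i = c}`. -/
theorem higKernel_conjugacy
    (m : ℕ) (hm : 2 ≤ m) (v w : ℝ) (hv : 0 < v) (hw : 0 < w)
    (n : ℕ) (hn : 1 ≤ n) (y : Fin n → Fin m) (c : Fin m)
    (s : ℝ) (hs : s = ((Finset.univ.filter fun i => y i = c).card : ℝ))
    (σ : ℝ) (hσ : 0 < σ) :
    higKernel m v w σ *
        ((1 + ((m : ℝ) - 1) * Real.exp (-1 / σ)) ^ (-(n : ℝ)) *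
          Real.exp (-((n : ℝ) - s) / σ))
      = higKernel m (v + s) (w + (n : ℝ) - s) σ := by
  have hm1 : (1 : ℝ) ≤ (m : ℝ) := by exact_mod_cast Nat.one_le_of_lt hm
  have hB : (0 : ℝ) < 1 + ((m : ℝ) - 1) * Real.exp (-1 / σ) := by
    have := Real.exp_pos (-1 / σ)
    nlinarith
  unfold higKernel
  rw [show -(v + s + (w + (n : ℝ) - s)) = -(v + w) + -(n : ℝ) by ring,
    Real.rpow_add hB, show -(w + (n : ℝ) - s + 1) / σ = -(w + 1) / σ + -((n : ℝ) - s) / σ by ring,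
    Real.exp_add]
  ring
end

section
/- Let m ≥ 2 be an integer, v, w > 0, n ≥ 1, y_1,…,y_n ∈ {1,…,m}, c ∈ {1,…,m}, and s = #{i : y_i = c}. Then the single-attribute marginal likelihood under the HIG(v,w) prior has the closed form ∫_0^∞ f(σ | v,w) · (1 + (m−1)·exp(−1/σ))^{−n} · exp(−(n−s)/σ) dσ = I(v+s, w+n−s)/I(v,w), where f(σ | v,w) = h_{v,w}(σ)/I(v,w). -/
open MeasureTheory

/-- The normalizing constant `I(v, w)` of the HIG kernel. -/
noncomputable def higConst (m : ℕ) (v w : ℝ) : ℝ :=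
  ∫ σ in Set.Ioi (0 : ℝ), higKernel m v w σ

/-- the single-attribute marginal likelihood under the `HIG(v, w)` prior
is the ratio `I(v+s, w+n−s) / I(v, w)`, where `s = #{i : y_i = c}`. -/
theorem hig_marginal_likelihood_single_attribute
    (m : ℕ) (hm : 2 ≤ m) (v w : ℝ) (hv : 0 < v) (hw : 0 < w)
    (n : ℕ) (hn : 1 ≤ n) (y : Fin n → Fin m) (c : Fin m)
    (s : ℝ) (hs : s = ((Finset.univ.filter fun i => y i = c).card : ℝ)) :
    ∫ σ in Set.Ioi (0 : ℝ),
        higKernel m v w σ / higConst m v w *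
          ((1 + ((m : ℝ) - 1) * Real.exp (-1 / σ)) ^ (-(n : ℝ)) *
            Real.exp (-((n : ℝ) - s) / σ))
      = higConst m (v + s) (w + (n : ℝ) - s) / higConst m v w := by
  have key : Set.EqOn
      (fun σ : ℝ => higKernel m v w σ / higConst m v w *
          ((1 + ((m : ℝ) - 1) * Real.exp (-1 / σ)) ^ (-(n : ℝ)) *
            Real.exp (-((n : ℝ) - s) / σ)))
      (fun σ : ℝ => higKernel m (v + s) (w + (n : ℝ) - s) σ / higConst m v w)
      (Set.Ioi (0 : ℝ)) := by
    intro σ hσ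
    have hσ0 : σ ≠ 0 := ne_of_gt hσ
    have hx : (0 : ℝ) < 1 + ((m : ℝ) - 1) * Real.exp (-1 / σ) := by
      have h1 : (1 : ℝ) ≤ (m : ℝ) - 1 := by
        have : (2 : ℝ) ≤ (m : ℝ) := by exact_mod_cast hm
        linarith
      have := Real.exp_pos (-1 / σ)
      nlinarith
    simp only [higKernel]
    have h1 : (1 + ((m : ℝ) - 1) * Real.exp (-1 / σ)) ^ (-(v + w)) *
        (1 + ((m : ℝ) - 1) * Real.exp (-1 / σ)) ^ (-(n : ℝ)) =
        (1 + ((m : ℝ) - 1) * Real.exp (-1 / σ)) ^ (-((v + s) + (w + (n : ℝ) - s))) := by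
      rw [← Real.rpow_add hx]; ring_nf
    have h2 : Real.exp (-(w + 1) / σ) * Real.exp (-((n : ℝ) - s) / σ) =
        Real.exp (-((w + (n : ℝ) - s) + 1) / σ) := by
      rw [← Real.exp_add, ← add_div]
      congr 1
      ring
    calc (1 + ((m : ℝ) - 1) * Real.exp (-1 / σ)) ^ (-(v + w)) * Real.exp (-(w + 1) / σ) / σ ^ 2 /
          higConst m v w *
          ((1 + ((m : ℝ) - 1) * Real.exp (-1 / σ)) ^ (-(n : ℝ)) * Real.exp (-((n : ℝ) - s) / σ))
        = ((1 + ((m : ℝ) - 1) * Real.exp (-1 / σ)) ^ (-(v + w)) *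
            (1 + ((m : ℝ) - 1) * Real.exp (-1 / σ)) ^ (-(n : ℝ))) *
          (Real.exp (-(w + 1) / σ) * Real.exp (-((n : ℝ) - s) / σ)) / σ ^ 2 /
          higConst m v w := by ring
      _ = (1 + ((m : ℝ) - 1) * Real.exp (-1 / σ)) ^ (-((v + s) + (w + (n : ℝ) - s))) *
          Real.exp (-((w + (n : ℝ) - s) + 1) / σ) / σ ^ 2 / higConst m v w := by
            rw [h1, h2]
  rw [setIntegral_congr_fun measurableSet_Ioi key, integral_div]
  rfl
end

section
/- Let p ≥ 1, m_j ≥ 2 for all j, v, w > 0, and let x_1,…,x_n ∈ Ω_p be observations. Let q be a prior p.m.f. on Ω_p of product form q(c) = ∏_{j=1}^p q_j(c_j) with each q_j a p.m.f. on {1,…,m_j}. For c ∈ Ω_p and j, set s_j(c) = #{i : x_{ij} = c_j}. Assume the attributes' scale parameters σ_1,…,σ_p are independent with densities f_j(σ_j | v,w) = h^{(j)}_{v,w}(σ_j)/I_j(v,w) (HIG kernels built with m = m_j). Then the marginal likelihood of the data has the closed form ∑_{c ∈ Ω_p} q(c) ∫_{(0,∞)^p} ∏_{i=1}^n p(x_i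 | c, σ) · ∏_{j=1}^p f_j(σ_j | v,w) dσ = ∑_{c ∈ Ω_p} ∏_{j=1}^p q_j(c_j) · I_j(v + s_j(c), w + n − s_j(c)) / I_j(v, w). -/
open MeasureTheory

lemma higKernel_shift (m : ℕ) (hm : 2 ≤ m) (v w sj : ℝ) (n : ℕ) (σ : ℝ) :
    ((1 + ((m : ℝ) - 1) * Real.exp (-1 / σ))⁻¹) ^ n *
      Real.exp (-(((n : ℝ) - sj) / σ)) * higKernel m v w σ
    = higKernel m (v + sj) (w + (n : ℝ) - sj) σ := by
  have hA : 0 < 1 + ((m : ℝ) - 1) * Real.exp (-1 / σ) := by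
    have h1 : (2 : ℝ) ≤ (m : ℝ) := by exact_mod_cast hm
    have h2 := Real.exp_pos (-1 / σ)
    nlinarith
  unfold higKernel
  have h1 : (1 + ((m : ℝ) - 1) * Real.exp (-1 / σ)) ^ (-(v + sj + (w + (n : ℝ) - sj)))
      = (1 + ((m : ℝ) - 1) * Real.exp (-1 / σ)) ^ (-(v + w)) *
        ((1 + ((m : ℝ) - 1) * Real.exp (-1 / σ))⁻¹) ^ n := by
    rw [show -(v + sj + (w + (n : ℝ) - sj)) = -(v + w) + (-(n : ℝ)) by ring,
      Real.rpow_add hA]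
    congr 1
    rw [inv_pow, ← Real.rpow_natCast (1 + ((m : ℝ) - 1) * Real.exp (-1 / σ)) n,
      ← Real.rpow_neg hA.le]
  have h2 : Real.exp (-(w + (n : ℝ) - sj + 1) / σ)
      = Real.exp (-(((n : ℝ) - sj) / σ)) * Real.exp (-(w + 1) / σ) := by
    rw [← Real.exp_add]; congr 1; ring
  rw [h1, h2]; ring

/-- Proposition 3: closed form of the marginal likelihood of the data
under independent HIG priors on the scales and a product prior `q` on the center. -/
theorem hamming_marginal_likelihood
    (p : ℕ) (hp : 1 ≤ p) (m : Fin p → ℕ) (hm : ∀ j, 2 ≤ m j)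
    (v w : ℝ) (hv : 0 < v) (hw : 0 < w)
    (n : ℕ) (x : Fin n → Π j : Fin p, Fin (m j))
    (q : Π j : Fin p, Fin (m j) → ℝ)
    (hq0 : ∀ j a, 0 ≤ q j a) (hq1 : ∀ j, ∑ a, q j a = 1)
    (s : (Π j : Fin p, Fin (m j)) → Fin p → ℝ)
    (hs : ∀ c j, s c j = ((Finset.univ.filter fun i => x i j = c j).card : ℝ)) :
    ∑ c : Π j : Fin p, Fin (m j),
        (∏ j : Fin p, q j (c j)) *
          ∫ σ in Set.univ.pi fun _ : Fin p => Set.Ioi (0 : ℝ),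
            (∏ i : Fin n, hammingPMF m c (x i) σ) *
              ∏ j : Fin p, higKernel (m j) v w (σ j) / higConst (m j) v w
      = ∑ c : Π j : Fin p, Fin (m j),
          ∏ j : Fin p,
            q j (c j) *
              (higConst (m j) (v + s c j) (w + (n : ℝ) - s c j) / higConst (m j) v w) := by
  have key : ∀ c : Π j : Fin p, Fin (m j),
      (∫ σ in Set.univ.pi fun _ : Fin p => Set.Ioi (0 : ℝ),
        (∏ i : Fin n, hammingPMF m c (x i) σ) *
          ∏ j : Fin p, higKernel (m j) v w (σ j) / higConst (m j) v w)
      = ∏ j : Fin p,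
          higConst (m j) (v + s c j) (w + (n : ℝ) - s c j) / higConst (m j) v w := by
    intro c
    -- pointwise factorization of the integrand
    have hcnt : ∀ j : Fin p,
        ∑ i : Fin n, (1 - if x i j = c j then (1 : ℝ) else 0) = (n : ℝ) - s c j := by
      intro j
      rw [Finset.sum_sub_distrib, Finset.sum_const, hs]
      simp [Finset.sum_boole]
    have hfun : ∀ σ : Fin p → ℝ,
        (∏ i : Fin n, hammingPMF m c (x i) σ) *
          ∏ j : Fin p, higKernel (m j) v w (σ j) / higConst (m j) v w
        = ∏ j : Fin p,
            higKernel (m j) (v + s c j) (w + (n : ℝ) - s c j) (σ j) /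
              higConst (m j) v w := by
      intro σ
      unfold hammingPMF
      rw [Finset.prod_mul_distrib, Finset.prod_const, ← Real.exp_sum]
      have hsum : ∑ i : Fin n, -∑ j : Fin p,
          (1 - if x i j = c j then (1 : ℝ) else 0) / σ j
          = ∑ j : Fin p, -(((n : ℝ) - s c j) / σ j) := by
        rw [Finset.sum_neg_distrib, Finset.sum_neg_distrib, Finset.sum_comm]
        congr 1
        refine Finset.sum_congr rfl fun j _ => ?_
        rw [← Finset.sum_div, hcnt]
      rw [hsum, Real.exp_sum, ← Finset.prod_inv_distrib, ← Finset.prod_pow,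
        ← Finset.prod_mul_distrib, ← Finset.prod_mul_distrib]
      simp only [Finset.card_univ, Fintype.card_fin]
      refine Finset.prod_congr rfl fun j _ => ?_
      rw [← mul_div_assoc, higKernel_shift (m j) (hm j) v w (s c j) n (σ j)]
    simp only [hfun]
    rw [← MeasureTheory.integral_indicator (MeasurableSet.univ_pi fun _ => measurableSet_Ioi)]
    have hind : (fun σ : Fin p → ℝ =>
        (Set.univ.pi fun _ : Fin p => Set.Ioi (0 : ℝ)).indicator
          (fun σ : Fin p → ℝ => ∏ j : Fin p,
            higKernel (m j) (v + s c j) (w + (n : ℝ) - s c j) (σ j) /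
              higConst (m j) v w) σ)
        = fun σ : Fin p → ℝ => ∏ j : Fin p,
            (Set.Ioi (0 : ℝ)).indicator
              (fun t => higKernel (m j) (v + s c j) (w + (n : ℝ) - s c j) t /
                higConst (m j) v w) (σ j) := by
      funext σ
      by_cases h : σ ∈ Set.univ.pi fun _ : Fin p => Set.Ioi (0 : ℝ)
      · rw [Set.indicator_of_mem h]
        refine Finset.prod_congr rfl fun j _ => ?_
        rw [Set.indicator_of_mem (h j (Set.mem_univ j))]
      · rw [Set.indicator_of_notMem h]
        obtain ⟨j, hj⟩ : ∃ j, σ j ∉ Set.Ioi (0 : ℝ) := by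
          simpa [Set.mem_pi] using h
        exact (Finset.prod_eq_zero (Finset.mem_univ j)
          (Set.indicator_of_notMem hj _)).symm
    rw [hind, MeasureTheory.volume_pi, MeasureTheory.integral_fintype_prod_eq_prod (ι := Fin p)]
    refine Finset.prod_congr rfl fun j _ => ?_
    rw [MeasureTheory.integral_indicator measurableSet_Ioi, integral_div]
    rfl
  refine Finset.sum_congr rfl fun c _ => ?_
  rw [key c, ← Finset.prod_mul_distrib]
end

section
/- Let m ≥ 2 be an integer and v, w > 0. A random variable with the HIG(v,w) distribution has no finite expectation: ∫_0^∞ σ · h_{v,w}(σ) dσ = ∞; equivalently, the function σ ↦ σ · h_{v,w}(σ) is not Lebesgue integrable on (0,∞). -/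
open MeasureTheory Set

/-- a `HIG(v, w)` random variable has no finite expectation:
`∫_0^∞ σ · h_{v,w}(σ) dσ = ∞`, equivalently `σ ↦ σ · h_{v,w}(σ)` is not integrable. -/
theorem hig_no_finite_expectation
    (m : ℕ) (hm : 2 ≤ m) (v w : ℝ) (hv : 0 < v) (hw : 0 < w) :
    (∫⁻ σ in Set.Ioi (0 : ℝ), ENNReal.ofReal (σ * higKernel m v w σ)) = ⊤ ∧
      ¬ IntegrableOn (fun σ : ℝ => σ * higKernel m v w σ) (Set.Ioi 0) volume := by
  set f : ℝ → ℝ := fun σ => σ * higKernel m v w σ with hfdef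
  have hm1 : (1:ℝ) ≤ (m:ℝ) - 1 := by
    have : (2:ℝ) ≤ (m:ℝ) := by exact_mod_cast hm
    linarith
  have hbase_pos : ∀ σ : ℝ, 0 < 1 + ((m:ℝ)-1) * Real.exp (-1/σ) := by
    intro σ
    have := Real.exp_pos (-1/σ)
    nlinarith
  have hmeas : Measurable f := by
    unfold f
    unfold higKernel
    fun_prop
  have hnonneg : ∀ σ ∈ Ioi (0:ℝ), 0 ≤ f σ := by
    intro σ hσ
    have hσ' : (0:ℝ) < σ := hσ
    have hk : 0 ≤ higKernel m v w σ := by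
      unfold higKernel
      apply div_nonneg _ (by positivity)
      exact mul_nonneg (Real.rpow_pos_of_pos (hbase_pos σ) _).le (Real.exp_pos _).le
    exact mul_nonneg hσ'.le hk
  set c : ℝ := (m:ℝ) ^ (-(v+w)) * Real.exp (-(w+1)) with hcdef
  have hc : 0 < c := by
    apply mul_pos _ (Real.exp_pos _)
    exact Real.rpow_pos_of_pos (by linarith) _
  have hbound : ∀ x ∈ Ioi (1:ℝ), c * x⁻¹ ≤ f x := by
    intro x hx
    have hx1 : (1:ℝ) < x := hx
    have hx0 : (0:ℝ) < x := by linarith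
    have hexp1 : Real.exp (-1/x) ≤ 1 := by
      rw [Real.exp_le_one_iff, neg_div]
      have : (0:ℝ) < 1/x := by positivity
      linarith
    have hbase_le : 1 + ((m:ℝ)-1) * Real.exp (-1/x) ≤ (m:ℝ) := by
      have hep := (Real.exp_pos (-1/x)).le
      nlinarith
    have r1 : (m:ℝ) ^ (-(v+w)) ≤ (1 + ((m:ℝ)-1) * Real.exp (-1/x)) ^ (-(v+w)) :=
      Real.rpow_le_rpow_of_nonpos (hbase_pos x) hbase_le (by linarith)
    have r2 : Real.exp (-(w+1)) ≤ Real.exp (-(w+1)/x) := by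
      apply Real.exp_le_exp.mpr
      have : (w+1)/x ≤ w+1 := div_le_self (by linarith) hx1.le
      have hxe : -(w+1)/x = -((w+1)/x) := by ring
      rw [hxe]
      linarith
    have hfx : f x = (1 + ((m:ℝ)-1) * Real.exp (-1/x)) ^ (-(v+w)) *
        Real.exp (-(w+1)/x) * x⁻¹ := by
      unfold f
      unfold higKernel
      field_simp
    rw [hfx, hcdef]
    have hinv : (0:ℝ) ≤ x⁻¹ := by positivity
    gcongr
  have hnotint : ¬ IntegrableOn f (Ioi 0) volume := by
    intro hInt
    have h1 : IntegrableOn f (Ioi 1) volume := hInt.mono_set (Ioi_subset_Ioi zero_le_one)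
    have h2 : IntegrableOn (fun x : ℝ => c * x⁻¹) (Ioi 1) volume := by
      apply Integrable.mono' h1 (measurable_const.mul measurable_inv).aestronglyMeasurable
      filter_upwards [ae_restrict_mem measurableSet_Ioi] with x hx
      have hx0 : (0:ℝ) < x := lt_trans one_pos hx
      show ‖c * x⁻¹‖ ≤ f x
      rw [Real.norm_eq_abs, abs_of_nonneg (mul_nonneg hc.le (inv_nonneg.mpr hx0.le))]
      exact hbound x hx
    have h3 : IntegrableOn (fun x : ℝ => x⁻¹) (Ioi 1) volume := by
      have := h2.const_mul c⁻¹
      simpa [← mul_assoc, inv_mul_cancel₀ hc.ne', IntegrableOn] using this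
    exact not_IntegrableOn_Ioi_inv h3
  refine ⟨?_, hnotint⟩
  by_contra htop
  refine hnotint ⟨hmeas.aestronglyMeasurable, ?_⟩
  rw [hasFiniteIntegral_iff_ofReal ?_]
  · exact lt_top_iff_ne_top.mpr htop
  · filter_upwards [ae_restrict_mem measurableSet_Ioi] with x hx using hnonneg x hx
end

section
/- Let m ≥ 2 be an integer and v, w > 0. Under the change of variables ε = (m−1)·exp(−1/σ)/(1 + (m−1)·exp(−1/σ)), the HIG kernel transforms into a truncated Beta kernel on (0, (m−1)/m): for every Borel set B ⊆ (0, (m−1)/m), ∫_{{σ > 0 : ε(σ) ∈ B}} h_{v,w}(σ) dσ = (m−1)^{−(w+1)} ∫_B ε^w · (1−ε)^{v−2} dε. In particular, the pushforward of the HIG(v,w) distribution under σ ↦ ε(σ) has density proportional to ε^w(1−ε)^{v−2} on (0,(m−1)/m), i.e., it is a Beta distribution truncated to (0,(m−1)/m). -/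
open MeasureTheory

/-- under the change of variables
`ε = (m−1)exp(−1/σ)/(1+(m−1)exp(−1/σ))`, the HIG kernel transforms into a truncated
Beta kernel `ε^w (1−ε)^{v−2}` on `(0, (m−1)/m)`, up to the factor `(m−1)^{−(w+1)}`. -/
theorem higKernel_change_of_variables_epsilon
    (m : ℕ) (hm : 2 ≤ m) (v w : ℝ) (hv : 0 < v) (hw : 0 < w) :
    ∀ B : Set ℝ, MeasurableSet B → B ⊆ Set.Ioo 0 (((m : ℝ) - 1) / m) →
      ∫ σ in {σ : ℝ | 0 < σ ∧
          ((m : ℝ) - 1) * Real.exp (-1 / σ) / (1 + ((m : ℝ) - 1) * Real.exp (-1 / σ)) ∈ B},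
        higKernel m v w σ
      = ((m : ℝ) - 1) ^ (-(w + 1)) * ∫ ε in B, ε ^ w * (1 - ε) ^ (v - 2) := by
  intro B hB hBsub
  set c : ℝ := (m : ℝ) - 1 with hc_def
  have hm2 : (2:ℝ) ≤ (m:ℝ) := by exact_mod_cast hm
  have hc : 1 ≤ c := by rw [hc_def]; linarith
  have hc0 : 0 < c := lt_of_lt_of_le one_pos hc
  have hmr : (m:ℝ) = c + 1 := by rw [hc_def]; ring
  have hBsub' : B ⊆ Set.Ioo 0 (c / (c + 1)) := by rwa [← hmr]
  -- basic facts about ε in the interval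
  have hIoo : ∀ ε ∈ Set.Ioo (0:ℝ) (c/(c+1)), 0 < ε ∧ ε < 1 ∧ 1 < c * (1 - ε) / ε := by
    intro ε hε
    obtain ⟨hε0, hε1⟩ := hε
    have hcc : c / (c+1) < 1 := by
      rw [div_lt_one (by linarith)]; linarith
    have hε1' : ε < 1 := hε1.trans hcc
    refine ⟨hε0, hε1', ?_⟩
    rw [lt_div_iff₀ hε0]
    have h := (lt_div_iff₀ (by linarith : (0:ℝ) < c+1)).mp hε1
    nlinarith
  set L : ℝ → ℝ := fun ε => Real.log c + Real.log (1 - ε) - Real.log ε with hL_def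
  have hLlog : ∀ ε ∈ Set.Ioo (0:ℝ) (c/(c+1)), L ε = Real.log (c * (1 - ε) / ε) := by
    intro ε hε
    obtain ⟨hε0, hε1', hkey⟩ := hIoo ε hε
    have h1ε : (0:ℝ) < 1 - ε := by nlinarith
    rw [hL_def]
    rw [Real.log_div (by positivity) (ne_of_gt hε0), Real.log_mul (ne_of_gt hc0) (ne_of_gt h1ε)]
  have hLpos : ∀ ε ∈ Set.Ioo (0:ℝ) (c/(c+1)), 0 < L ε := by
    intro ε hε
    obtain ⟨hε0, hε1', hkey⟩ := hIoo ε hε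
    rw [hLlog ε hε]
    exact Real.log_pos hkey
  have hexpL : ∀ ε ∈ Set.Ioo (0:ℝ) (c/(c+1)), Real.exp (L ε) = c * (1 - ε) / ε := by
    intro ε hε
    obtain ⟨hε0, hε1', _⟩ := hIoo ε hε
    have h1ε : (0:ℝ) < 1 - ε := by nlinarith
    rw [hLlog ε hε, Real.exp_log (by positivity)]
  set ψ : ℝ → ℝ := fun ε => (L ε)⁻¹ with hψ_def
  set φ : ℝ → ℝ := fun σ => c * Real.exp (-1 / σ) / (1 + c * Real.exp (-1 / σ)) with hφ_def
  have hψpos : ∀ ε ∈ Set.Ioo (0:ℝ) (c/(c+1)), 0 < ψ ε := by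
    intro ε hε; exact inv_pos.mpr (hLpos ε hε)
  have hφψ : ∀ ε ∈ Set.Ioo (0:ℝ) (c/(c+1)), φ (ψ ε) = ε := by
    intro ε hε
    obtain ⟨hε0, hε1', _⟩ := hIoo ε hε
    have hL0 : L ε ≠ 0 := ne_of_gt (hLpos ε hε)
    have h1ε : (0:ℝ) < 1 - ε := by nlinarith
    have hexp : Real.exp (-1 / ψ ε) = ε / (c * (1 - ε)) := by
      have hd : -1 / ψ ε = -(L ε) := by rw [hψ_def]; field_simp
      rw [hd, Real.exp_neg, hexpL ε hε, inv_div]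
    rw [hφ_def]
    simp only [hexp]
    field_simp
    ring
  have hψφ : ∀ σ : ℝ, 0 < σ → φ σ ∈ Set.Ioo (0:ℝ) (c/(c+1)) → ψ (φ σ) = σ := by
    intro σ hσ hφσ
    have ht : 0 < Real.exp (-1/σ) := Real.exp_pos _
    have hd : 0 < 1 + c * Real.exp (-1/σ) := by positivity
    have hφval : φ σ = c * Real.exp (-1/σ) / (1 + c * Real.exp (-1/σ)) := rfl
    have h1 : 1 - φ σ = 1 / (1 + c * Real.exp (-1/σ)) := by
      rw [hφval]; field_simp; ring
    have h2 : c * (1 - φ σ) / φ σ = Real.exp (1/σ) := by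
      rw [h1, hφval]
      rw [show (1:ℝ)/σ = -(-1/σ) by ring, Real.exp_neg]
      field_simp
    rw [hψ_def]
    simp only
    rw [hLlog _ hφσ, h2, Real.log_exp]
    field_simp
  -- the set is the image of B under ψ
  have hset : {σ : ℝ | 0 < σ ∧ φ σ ∈ B} = ψ '' B := by
    ext σ
    constructor
    · rintro ⟨hσ, hφσ⟩
      exact ⟨φ σ, hφσ, hψφ σ hσ (hBsub' hφσ)⟩
    · rintro ⟨ε, hε, rfl⟩
      exact ⟨hψpos ε (hBsub' hε), by rw [hφψ ε (hBsub' hε)]; exact hε⟩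
  have hinj : Set.InjOn ψ B := by
    intro a ha b hb hab
    have := hφψ a (hBsub' ha)
    rw [← this, hab, hφψ b (hBsub' hb)]
  -- derivative
  set ψ' : ℝ → ℝ := fun ε => (ε * (1 - ε) * (L ε)^2)⁻¹ with hψ'_def
  have hderiv : ∀ ε ∈ B, HasDerivWithinAt ψ (ψ' ε) B ε := by
    intro ε hε
    obtain ⟨hε0, hε1', _⟩ := hIoo ε (hBsub' hε)
    have h1ε : (0:ℝ) < 1 - ε := by linarith
    have hL0 : L ε ≠ 0 := ne_of_gt (hLpos ε (hBsub' hε))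
    have h1 : HasDerivAt (fun x : ℝ => Real.log (1 - x)) ((1 - ε)⁻¹ * (-1)) ε := by
      have := (Real.hasDerivAt_log (ne_of_gt h1ε)).comp ε ((hasDerivAt_id ε).const_sub 1)
      simpa [Function.comp_def] using this
    have h2 : HasDerivAt Real.log ε⁻¹ ε := Real.hasDerivAt_log (ne_of_gt hε0)
    have hM : HasDerivAt L ((1 - ε)⁻¹ * (-1) - ε⁻¹) ε := by
      rw [hL_def]
      exact (h1.const_add (Real.log c)).sub h2
    have hInv : HasDerivAt ψ (-((1 - ε)⁻¹ * (-1) - ε⁻¹) / (L ε)^2) ε := hM.inv hL0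
    have heq : -((1 - ε)⁻¹ * (-1) - ε⁻¹) / (L ε)^2 = ψ' ε := by
      rw [hψ'_def]
      field_simp
      ring
    rw [← heq]
    exact hInv.hasDerivWithinAt
  -- change of variables
  rw [hset, integral_image_eq_integral_abs_deriv_smul hB hderiv hinj]
  rw [← integral_const_mul]
  apply setIntegral_congr_fun hB
  intro ε hε
  obtain ⟨hε0, hε1', hkey⟩ := hIoo ε (hBsub' hε)
  have h1ε : (0:ℝ) < 1 - ε := by linarith
  have hLp : 0 < L ε := hLpos ε (hBsub' hε)
  have hL0 : L ε ≠ 0 := ne_of_gt hLp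
  -- compute the kernel at ψ ε
  have hexp1 : Real.exp (-1 / ψ ε) = ε / (c * (1 - ε)) := by
    have hd : -1 / ψ ε = -(L ε) := by rw [hψ_def]; field_simp
    rw [hd, Real.exp_neg, hexpL ε (hBsub' hε), inv_div]
  have hbase : 1 + c * (ε / (c * (1 - ε))) = (1 - ε)⁻¹ := by
    field_simp
    ring
  have hexp2 : Real.exp (-(w + 1) / ψ ε) = (c * (1 - ε) / ε) ^ (-(w+1)) := by
    have hd : -(w + 1) / ψ ε = -(w+1) * L ε := by rw [hψ_def]; field_simp
    rw [hd, Real.rpow_def_of_pos (by positivity), ← hLlog ε (hBsub' hε)]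
    ring_nf
  have hker : higKernel m v w (ψ ε) =
      ((1 - ε)⁻¹) ^ (-(v + w)) * (c * (1 - ε) / ε) ^ (-(w+1)) / ((L ε)⁻¹)^2 := by
    simp only [higKernel, ← hc_def]
    rw [hexp1, hexp2, hbase, hψ_def]
  have habs : |ψ' ε| = (ε * (1 - ε) * (L ε)^2)⁻¹ := by
    rw [hψ'_def, abs_of_pos (by positivity)]
  simp only [smul_eq_mul]
  rw [habs, hker]
  -- now pure rpow algebra
  have e0 : ((1 - ε)⁻¹) ^ (-(v + w)) = (1 - ε) ^ (v + w) := by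
    rw [← Real.rpow_neg_one (1 - ε), ← Real.rpow_mul (le_of_lt h1ε)]
    norm_num
  have e1 : (c * (1 - ε) / ε) ^ (-(w+1)) =
      (ε ^ w * ε) / (c ^ (w+1) * ((1 - ε) ^ (w+1))) := by
    rw [Real.rpow_neg (by positivity), ← Real.inv_rpow (by positivity), inv_div,
      Real.div_rpow (le_of_lt hε0) (by positivity), Real.mul_rpow (le_of_lt hc0) (le_of_lt h1ε),
      show w + 1 = w + 1 from rfl, Real.rpow_add hε0, Real.rpow_one]
  have e2 : (1 - ε) ^ (v + w) = (1 - ε) ^ (v - 2) * (1 - ε) ^ (w+1) * (1 - ε) := by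
    rw [show v + w = (v - 2) + (w + 1) + 1 by ring, Real.rpow_add h1ε, Real.rpow_add h1ε,
      Real.rpow_one]
  have e3 : c ^ (-(w+1)) = (c ^ (w+1))⁻¹ := Real.rpow_neg (le_of_lt hc0) _
  rw [e0, e1, e2, e3]
  have p1 : (0:ℝ) < c ^ (w+1) := Real.rpow_pos_of_pos hc0 _
  have p2 : (0:ℝ) < (1 - ε) ^ (w+1) := Real.rpow_pos_of_pos h1ε _
  field_simp
end

section
/- Let p ≥ 1, m_j ≥ 2 for all j, c ∈ Ω_p, σ_j > 0 for all j, and define the scatter parameters ε_j = (m_j−1)/(exp(1/σ_j) + m_j − 1) ∈ (0,(m_j−1)/m_j). Then for every x ∈ Ω_p the parsimonious latent class kernel coincides with the Hamming p.m.f.: ∏_{j=1}^p (1−ε_j) · [ε_j/((m_j−1)(1−ε_j))]^{1−δ_{c_j}(x_j)} = p(x | c, σ). Hence the Hamming mixture component is exactly the parsimonious latent class component under this reparametrization. -/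
/-- with scatter parameters `ε_j = (m_j−1)/(exp(1/σ_j)+m_j−1)`, the
parsimonious latent class kernel of Celeux–Govaert coincides with the Hamming p.m.f. -/
theorem parsimonious_LCM_eq_hammingPMF
    (p : ℕ) (hp : 1 ≤ p) (m : Fin p → ℕ) (hm : ∀ j, 2 ≤ m j)
    (c : Π j : Fin p, Fin (m j)) (σ : Fin p → ℝ) (hσ : ∀ j, 0 < σ j)
    (ε : Fin p → ℝ)
    (hε : ∀ j, ε j = ((m j : ℝ) - 1) / (Real.exp (1 / σ j) + (m j : ℝ) - 1))
    (x : Π j : Fin p, Fin (m j)) :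
    ∏ j : Fin p,
        (1 - ε j) *
          (ε j / (((m j : ℝ) - 1) * (1 - ε j))) ^
            (1 - if x j = c j then (1 : ℝ) else 0)
      = hammingPMF m c x σ := by
  unfold hammingPMF
  rw [← Finset.prod_inv_distrib, ← Finset.sum_neg_distrib, Real.exp_sum,
    ← Finset.prod_mul_distrib]
  refine Finset.prod_congr rfl fun j _ => ?_
  set δ : ℝ := if x j = c j then (1 : ℝ) else 0 with hδ
  have hE : (0:ℝ) < Real.exp (1 / σ j) := Real.exp_pos _
  have ha : (1:ℝ) ≤ (m j : ℝ) - 1 := by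
    have := hm j
    have : (2:ℝ) ≤ (m j : ℝ) := by exact_mod_cast this
    linarith
  have ha0 : (0:ℝ) < (m j : ℝ) - 1 := by linarith
  have hEa : (0:ℝ) < Real.exp (1 / σ j) + (m j : ℝ) - 1 := by linarith
  have h1ε : 1 - ε j = Real.exp (1 / σ j) / (Real.exp (1 / σ j) + (m j : ℝ) - 1) := by
    rw [hε j]
    field_simp
    ring
  have hne : Real.exp (-1 / σ j) = (Real.exp (1 / σ j))⁻¹ := by
    rw [← Real.exp_neg]; ring_nf
  have hratio : ε j / (((m j : ℝ) - 1) * (1 - ε j)) = Real.exp (-1 / σ j) := by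
    rw [hε j, hne]
    rw [eq_comm, inv_eq_iff_eq_inv, eq_comm, inv_div]
    field_simp
    ring
  have hpow : Real.exp (-1 / σ j) ^ (1 - δ) = Real.exp ((-1 / σ j) * (1 - δ)) := by
    rw [← Real.exp_mul]
  have h2 : (1 + ((m j : ℝ) - 1) * Real.exp (-1 / σ j))⁻¹
      = Real.exp (1 / σ j) / (Real.exp (1 / σ j) + (m j : ℝ) - 1) := by
    rw [hne, eq_div_iff (ne_of_gt hEa), inv_mul_eq_div, div_eq_iff]
    · field_simp
      ring
    · positivity
  rw [hratio, hpow, h1ε, h2]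
  have h3 : -((1 - δ) / σ j) = -1 / σ j * (1 - δ) := by ring
  rw [h3]
end

section
/- Let p ≥ 1 and suppose all attributes have the same number of modalities m ≥ 2, so Ω_p = {1,…,m}^p. Let v, w > 0, c ∈ Ω_p, and let x_1,…,x_n ∈ Ω_p be observations with total Hamming distance D = ∑_{i=1}^n d_H(c, x_i) from the center. Then for every σ > 0, multiplying the HIG prior kernel by the Hamming likelihood with common scale σ yields exactly the HIG kernel with updated parameters: h_{v,w}(σ) · (1 + (m−1)·exp(−1/σ))^{−np} · exp(−D/σ) = h_{v + np − D, w + D}(σ). Hence the full conditional of the common scale parameter σ is HIG(v*, w*) with v* = v + np − ∑_i d_H(c, x_i) and w* = w + ∑_i d_H(c, x_i). -/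
/-- when all attributes share `m` modalities and a common scale `σ`, the
HIG prior kernel times the Hamming likelihood equals the HIG kernel with updated
parameters `v* = v + np − D` and `w* = w + D`, where `D = ∑ᵢ d_H(c, xᵢ)`. -/
theorem higKernel_conjugacy_common_scale
    (m : ℕ) (hm : 2 ≤ m) (v w : ℝ) (hv : 0 < v) (hw : 0 < w)
    (p : ℕ) (hp : 1 ≤ p) (n : ℕ)
    (c : Fin p → Fin m) (x : Fin n → Fin p → Fin m)
    (D : ℝ) (hD : D = ∑ i : Fin n, (hammingDist c (x i) : ℝ))
    (σ : ℝ) (hσ : 0 < σ) :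
    higKernel m v w σ *
        ((1 + ((m : ℝ) - 1) * Real.exp (-1 / σ)) ^ (-((n : ℝ) * p)) *
          Real.exp (-D / σ))
      = higKernel m (v + (n : ℝ) * p - D) (w + D) σ := by
  set A := 1 + ((m : ℝ) - 1) * Real.exp (-1 / σ) with hA
  have hbase : (0:ℝ) < A := by
    have h1 : (1:ℝ) ≤ (m:ℝ) := by exact_mod_cast Nat.one_le_of_lt hm
    have := Real.exp_pos (-1 / σ)
    rw [hA]; nlinarith
  have h1 : A ^ (-(v + w)) * A ^ (-((n : ℝ) * p))
      = A ^ (-(v + (n : ℝ) * p - D + (w + D))) := by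
    rw [← Real.rpow_add hbase]; ring_nf
  have h2 : Real.exp (-(w + 1) / σ) * Real.exp (-D / σ)
      = Real.exp (-(w + D + 1) / σ) := by
    rw [← Real.exp_add]
    congr 1
    field_simp
    ring
  unfold higKernel
  rw [show A ^ (-(v + w)) * Real.exp (-(w + 1) / σ) / σ ^ 2 *
      (A ^ (-((n : ℝ) * p)) * Real.exp (-D / σ))
      = (A ^ (-(v + w)) * A ^ (-((n : ℝ) * p))) *
        (Real.exp (-(w + 1) / σ) * Real.exp (-D / σ)) / σ ^ 2 from by ring,
    h1, h2]
end
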